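/- arXiv:1705.10904 — 7 statements merged into one kernel-verified Lean document; each statement's English description precedes it below -/
import Mathlib

section
/- Let α be a finite type and let p, q be pmfs on α. For every function D : α → ℝ with 0 < D x < 1 for all x, V(p,q,D) ≤ V(p,q,D*), where D*(x) = p x / (p x + q x) at points with p x + q x > 0 (and the value of D* at points with p x = q x = 0 is irrelevant since such points contribute 0 to V). Moreover equality holds if and only if D x = p x / (p x + q x) for every x with p x + q x > 0. -/
open Finset

lemma key_pt (a b t : ℝ) (ha : 0 < a) (hb : 0 < b) (ht0 : 0 < t) (ht1 : t < 1) :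
    a * Real.log t + b * Real.log (1 - t) ≤
      a * Real.log (a / (a + b)) + b * Real.log (1 - a / (a + b)) ∧
    (a * Real.log t + b * Real.log (1 - t) =
      a * Real.log (a / (a + b)) + b * Real.log (1 - a / (a + b)) ↔
      t = a / (a + b)) := by
  have hs : 0 < a + b := by linarith
  have h1 : 1 - a / (a + b) = b / (a + b) := by field_simp; ring
  rw [h1]
  have h1t : 0 < 1 - t := by linarith
  have hlog1 : Real.log t - Real.log (a / (a + b)) = Real.log (t * (a + b) / a) := by
    rw [Real.log_div (by positivity) ha.ne', Real.log_mul ht0.ne' hs.ne',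
      Real.log_div ha.ne' hs.ne']
    ring
  have hlog2 : Real.log (1 - t) - Real.log (b / (a + b)) =
      Real.log ((1 - t) * (a + b) / b) := by
    rw [Real.log_div (by positivity) hb.ne', Real.log_mul h1t.ne' hs.ne',
      Real.log_div hb.ne' hs.ne']
    ring
  have hx1 : (0:ℝ) < t * (a + b) / a := by positivity
  have hx2 : (0:ℝ) < (1 - t) * (a + b) / b := by positivity
  have hb1 : Real.log (t * (a + b) / a) ≤ t * (a + b) / a - 1 :=
    Real.log_le_sub_one_of_pos hx1
  have hb2 : Real.log ((1 - t) * (a + b) / b) ≤ (1 - t) * (a + b) / b - 1 :=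
    Real.log_le_sub_one_of_pos hx2
  have hsum : a * (t * (a + b) / a - 1) + b * ((1 - t) * (a + b) / b - 1) = 0 := by
    field_simp; ring
  constructor
  · nlinarith [mul_le_mul_of_nonneg_left hb1 ha.le, mul_le_mul_of_nonneg_left hb2 hb.le]
  · constructor
    · intro heq
      by_contra hne
      have hne1 : t * (a + b) / a ≠ 1 := by
        intro h
        apply hne
        field_simp at h
        field_simp
        linarith
      have : Real.log (t * (a + b) / a) < t * (a + b) / a - 1 :=
        Real.log_lt_sub_one_of_pos hx1 hne1
      nlinarith [mul_lt_mul_of_pos_left this ha, mul_le_mul_of_nonneg_left hb2 hb.le]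
    · intro h; rw [h, h1]
  
lemma pt (a b t : ℝ) (ha : 0 ≤ a) (hb : 0 ≤ b) (ht0 : 0 < t) (ht1 : t < 1) :
    ((if a = 0 then 0 else a * Real.log t) + (if b = 0 then 0 else b * Real.log (1 - t)) ≤
      (if a = 0 then (0:ℝ) else a * Real.log (a / (a + b))) +
        (if b = 0 then 0 else b * Real.log (1 - a / (a + b)))) ∧
    (((if a = 0 then 0 else a * Real.log t) + (if b = 0 then 0 else b * Real.log (1 - t)) =
      (if a = 0 then (0:ℝ) else a * Real.log (a / (a + b))) +
        (if b = 0 then 0 else b * Real.log (1 - a / (a + b)))) ↔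
      (0 < a + b → t = a / (a + b))) := by
  rcases eq_or_lt_of_le ha with ha0 | ha0 <;> rcases eq_or_lt_of_le hb with hb0 | hb0
  · simp [← ha0, ← hb0]
  · subst ha0
    have hb' : b ≠ 0 := hb0.ne'
    simp only [if_pos rfl, if_true, if_neg hb', zero_add, zero_div, sub_zero, Real.log_one,
      mul_zero]
    have hlog : Real.log (1 - t) < 0 := Real.log_neg (by linarith) (by linarith)
    have hlt : b * Real.log (1 - t) < 0 := mul_neg_of_pos_of_neg hb0 hlog
    constructor
    · linarith
    · constructor
      · intro h; linarith
      · intro h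
        exfalso
        have := h (by linarith)
        linarith
  · subst hb0
    have ha' : a ≠ 0 := ha0.ne'
    have haa : a / (a + 0) = 1 := by rw [add_zero, div_self ha0.ne']
    simp only [if_pos rfl, if_true, if_neg ha', add_zero, haa, Real.log_one, mul_zero,
      div_self ha']
    have hlog : Real.log t < 0 := Real.log_neg ht0 ht1
    have hlt : a * Real.log t < 0 := mul_neg_of_pos_of_neg ha0 hlog
    constructor
    · linarith
    · constructor
      · intro h; linarith
      · intro h
        exfalso
        have := h (by linarith)
        linarith
  · have ha' : a ≠ 0 := ha0.ne'
    have hb' : b ≠ 0 := hb0.ne'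
    simp only [if_neg ha', if_neg hb']
    obtain ⟨h1, h2⟩ := key_pt a b t ha0 hb0 ht0 ht1
    exact ⟨h1, h2.trans ⟨fun h _ => h, fun h => h (by linarith)⟩⟩


/-- The GAN objective `V(p,q,D) = Σ_x p x * log (D x) + Σ_x q x * log (1 - D x)`,
where a summand is taken to be `0` when its pmf coefficient is `0`. -/
noncomputable def ganV {α : Type*} [Fintype α] (p q D : α → ℝ) : ℝ :=
  (∑ x, if p x = 0 then 0 else p x * Real.log (D x)) +
  (∑ x, if q x = 0 then 0 else q x * Real.log (1 - D x))

/-- Corollary 1 (Proposition 1 of Goodfellow et al.), discrete form: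
for fixed generator, the optimal discriminator is `D* = p / (p + q)`,
with equality iff `D` agrees with `D*` on the support of `p + q`. -/
theorem optimal_discriminator {α : Type*} [Fintype α] (p q : α → ℝ)
    (hp0 : ∀ x, 0 ≤ p x) (hp1 : ∑ x, p x = 1)
    (hq0 : ∀ x, 0 ≤ q x) (hq1 : ∑ x, q x = 1)
    (D : α → ℝ) (hD : ∀ x, 0 < D x ∧ D x < 1) :
    ganV p q D ≤ ganV p q (fun x => p x / (p x + q x)) ∧
    (ganV p q D = ganV p q (fun x => p x / (p x + q x)) ↔
      ∀ x, 0 < p x + q x → D x = p x / (p x + q x)) := by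
  have hV : ∀ E : α → ℝ, ganV p q E = ∑ x, ((if p x = 0 then 0 else p x * Real.log (E x)) +
      (if q x = 0 then 0 else q x * Real.log (1 - E x))) := by
    intro E; rw [ganV, Finset.sum_add_distrib]
  rw [hV, hV]
  have hle : ∀ x ∈ Finset.univ (α := α),
      ((if p x = 0 then 0 else p x * Real.log (D x)) +
        (if q x = 0 then 0 else q x * Real.log (1 - D x))) ≤
      ((if p x = 0 then (0:ℝ) else p x * Real.log (p x / (p x + q x))) +
        (if q x = 0 then 0 else q x * Real.log (1 - p x / (p x + q x)))) := fun x _ =>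
    (pt (p x) (q x) (D x) (hp0 x) (hq0 x) (hD x).1 (hD x).2).1
  refine ⟨Finset.sum_le_sum hle, ?_⟩
  rw [Finset.sum_eq_sum_iff_of_le hle]
  constructor
  · intro h x hx
    exact ((pt (p x) (q x) (D x) (hp0 x) (hq0 x) (hD x).1 (hD x).2).2.mp
      (h x (Finset.mem_univ x))) hx
  · intro h x _
    exact (pt (p x) (q x) (D x) (hp0 x) (hq0 x) (hD x).1 (hD x).2).2.mpr (h x)
end

section
/- Let α be a finite type and let p, q be pmfs on α. Then the value of the GAN objective at the optimal discriminator satisfies Σ_{x : p x + q x > 0} [ p x * log (p x / (p x + q x)) + q x * log (q x / (p x + q x)) ] = − log 4 + 2 * D_JS(p ‖ q), where summands with zero numerator are taken to be 0. -/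
open Finset

/-- Kullback–Leibler divergence `D_KL(p ‖ q) = Σ_x p x * log (p x / q x)`,
with the convention that a summand is `0` when `p x = 0`. -/
noncomputable def klDiv {α : Type*} [Fintype α] (p q : α → ℝ) : ℝ :=
  ∑ x, if p x = 0 then 0 else p x * Real.log (p x / q x)

/-- Jensen–Shannon divergence
`D_JS(p ‖ q) = (1/2) D_KL(p ‖ m) + (1/2) D_KL(q ‖ m)` with `m = (p + q)/2`. -/
noncomputable def jsDiv {α : Type*} [Fintype α] (p q : α → ℝ) : ℝ :=
  (1 / 2) * klDiv p (fun x => (p x + q x) / 2) +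
  (1 / 2) * klDiv q (fun x => (p x + q x) / 2)

/-- The GAN objective evaluated at the optimal discriminator `D* = p/(p+q)`
equals `− log 4 + 2 * D_JS(p ‖ q)`. -/
theorem gan_value_at_optimal_discriminator {α : Type*} [Fintype α] (p q : α → ℝ)
    (hp0 : ∀ x, 0 ≤ p x) (hp1 : ∑ x, p x = 1)
    (hq0 : ∀ x, 0 ≤ q x) (hq1 : ∑ x, q x = 1) :
    ∑ x ∈ univ.filter (fun x => 0 < p x + q x),
      ((if p x = 0 then 0 else p x * Real.log (p x / (p x + q x))) +
       (if q x = 0 then 0 else q x * Real.log (q x / (p x + q x)))) =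
      -Real.log 4 + 2 * jsDiv p q := by
  have hfull : ∑ x ∈ univ.filter (fun x => 0 < p x + q x),
      ((if p x = 0 then 0 else p x * Real.log (p x / (p x + q x))) +
       (if q x = 0 then 0 else q x * Real.log (q x / (p x + q x)))) =
      ∑ x,
      ((if p x = 0 then 0 else p x * Real.log (p x / (p x + q x))) +
       (if q x = 0 then 0 else q x * Real.log (q x / (p x + q x)))) := by
    refine Finset.sum_subset (filter_subset _ _) ?_
    intro x _ hx
    simp only [mem_filter, mem_univ, true_and, not_lt] at hx
    have hp : p x = 0 := le_antisymm (by linarith [hq0 x]) (hp0 x)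
    have hq : q x = 0 := le_antisymm (by linarith [hp0 x]) (hq0 x)
    simp [hp, hq]
  rw [hfull]
  have key : ∀ x : α,
      ((if p x = 0 then 0 else p x * Real.log (p x / (p x + q x))) +
       (if q x = 0 then 0 else q x * Real.log (q x / (p x + q x)))) =
      ((if p x = 0 then 0 else p x * Real.log (p x / ((p x + q x) / 2))) - p x * Real.log 2) +
      ((if q x = 0 then 0 else q x * Real.log (q x / ((p x + q x) / 2))) - q x * Real.log 2) := by
    intro x
    have hterm : ∀ a b : ℝ, 0 ≤ a → 0 ≤ b →
        (if a = 0 then 0 else a * Real.log (a / (a + b))) =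
        (if a = 0 then 0 else a * Real.log (a / ((a + b) / 2))) - a * Real.log 2 := by
      intro a b ha hb
      by_cases h : a = 0
      · simp [h]
      · have ha' : 0 < a := lt_of_le_of_ne ha (Ne.symm h)
        have hab : 0 < a + b := by linarith
        simp only [h, if_false]
        have : a / (a + b) = (a / ((a + b) / 2)) / 2 := by
          field_simp
        rw [this, Real.log_div (by positivity) (by norm_num)]
        ring
    have h1 := hterm (p x) (q x) (hp0 x) (hq0 x)
    have h2 := hterm (q x) (p x) (hq0 x) (hp0 x)
    rw [h1]
    rw [show p x + q x = q x + p x from add_comm _ _] at *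
    rw [h2]
  simp only [key]
  rw [Finset.sum_add_distrib, Finset.sum_sub_distrib, Finset.sum_sub_distrib,
    ← Finset.sum_mul, ← Finset.sum_mul, hp1, hq1]
  have h4 : Real.log 4 = 2 * Real.log 2 := by
    rw [show (4:ℝ) = 2^2 by norm_num, Real.log_pow]; push_cast; ring
  simp only [jsDiv, klDiv]
  rw [h4]
  ring
end

section
/- Let C and X be finite types, let p_c and q_c be pmfs on C, and for each c : C let P c and Q c be pmfs on X. If Q c = P c for every c : C, then C(G) = − log 4 + 2 * D_JS(p_c ‖ q_c). -/
open Finset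

/-- The weakly supervised GAN criterion `C(G)`: the GAN objective at the optimal
discriminator, for joint densities `p(c,x) = p_c c * P c x` and `q(c,x) = q_c c * Q c x`.
Summands with zero numerator are taken to be `0`, and only points with
`p(c,x) + q(c,x) > 0` contribute. -/
noncomputable def CG {C X : Type*} [Fintype C] [Fintype X]
    (pc qc : C → ℝ) (P Q : C → X → ℝ) : ℝ :=
  ∑ c, ∑ x,
    if 0 < pc c * P c x + qc c * Q c x then
      (if pc c * P c x = 0 then 0 else
        pc c * P c x * Real.log (pc c * P c x / (pc c * P c x + qc c * Q c x))) +
      (if qc c * Q c x = 0 then 0 else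
        qc c * Q c x * Real.log (qc c * Q c x / (pc c * P c x + qc c * Q c x)))
    else 0

/-- Theorem 2, value part: if the generator conditionals match the data conditionals
(`Q c = P c` for every `c`), then `C(G) = − log 4 + 2 * D_JS(p_c ‖ q_c)`. -/
theorem CG_value_of_matched_conditionals
    {C X : Type*} [Fintype C] [Fintype X]
    (pc qc : C → ℝ)
    (hpc0 : ∀ c, 0 ≤ pc c) (hpc1 : ∑ c, pc c = 1)
    (hqc0 : ∀ c, 0 ≤ qc c) (hqc1 : ∑ c, qc c = 1)
    (P Q : C → X → ℝ)
    (hP0 : ∀ c x, 0 ≤ P c x) (hP1 : ∀ c, ∑ x, P c x = 1)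
    (hQ0 : ∀ c x, 0 ≤ Q c x) (hQ1 : ∀ c, ∑ x, Q c x = 1)
    (hQP : ∀ c, Q c = P c) :
    CG pc qc P Q = -Real.log 4 + 2 * jsDiv pc qc := by
  have hlog4 : Real.log 4 = 2 * Real.log 2 := by
    rw [show (4:ℝ) = 2^2 by norm_num, Real.log_pow]; push_cast; ring
  set g : C → ℝ := fun c =>
    (if pc c = 0 then 0 else pc c * Real.log (pc c / (pc c + qc c))) +
    (if qc c = 0 then 0 else qc c * Real.log (qc c / (pc c + qc c))) with hg
  have hCG : CG pc qc P Q = ∑ c, g c := by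
    unfold CG
    refine Finset.sum_congr rfl fun c _ => ?_
    have hsum : ∑ x, P c x * g c = g c := by
      rw [← Finset.sum_mul, hP1 c, one_mul]
    rw [← hsum]
    refine Finset.sum_congr rfl fun x _ => ?_
    rw [hQP c]
    rcases eq_or_lt_of_le (hP0 c x) with h0 | hpos
    · rw [← h0]; simp
    · have hPne := ne_of_gt hpos
      by_cases hp : pc c = 0
      · by_cases hq : qc c = 0
        · simp [hp, hq, hg]
        · have hqpos : 0 < qc c := lt_of_le_of_ne (hqc0 c) (Ne.symm hq)
          have hcond : 0 < pc c * P c x + qc c * P c x := by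
            rw [hp]; simpa using mul_pos hqpos hpos
          rw [if_pos hcond]
          simp only [hg, hp, if_pos rfl, zero_mul, if_pos rfl, zero_add, if_neg hq,
            if_neg (by positivity : qc c * P c x ≠ 0)]
          rw [div_self (by positivity : qc c * P c x ≠ 0),
            div_self (ne_of_gt hqpos), Real.log_one]
          simp
      · have hppos : 0 < pc c := lt_of_le_of_ne (hpc0 c) (Ne.symm hp)
        by_cases hq : qc c = 0
        · have hcond : 0 < pc c * P c x + qc c * P c x := by
            rw [hq]; simpa using mul_pos hppos hpos
          rw [if_pos hcond]
          simp only [hg, hq, zero_mul, if_pos rfl, add_zero, if_neg hp,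
            if_neg (by positivity : pc c * P c x ≠ 0)]
          rw [div_self (by positivity : pc c * P c x ≠ 0),
            div_self (ne_of_gt hppos), Real.log_one]
          simp
        · have hqpos : 0 < qc c := lt_of_le_of_ne (hqc0 c) (Ne.symm hq)
          have hcond : 0 < pc c * P c x + qc c * P c x := by positivity
          rw [if_pos hcond]
          have hden : pc c * P c x + qc c * P c x = (pc c + qc c) * P c x := by ring
          rw [if_neg (by positivity : pc c * P c x ≠ 0),
            if_neg (by positivity : qc c * P c x ≠ 0), hden,
            mul_div_mul_right _ _ hPne, mul_div_mul_right _ _ hPne]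
          simp only [hg, if_neg hp, if_neg hq]
          ring
  have hKLp : klDiv pc (fun c => (pc c + qc c) / 2) =
      (∑ c, (if pc c = 0 then 0 else pc c * Real.log (pc c / (pc c + qc c)))) + Real.log 2 := by
    unfold klDiv
    rw [show Real.log 2 = (∑ c, pc c * Real.log 2) by
      rw [← Finset.sum_mul, hpc1, one_mul], ← Finset.sum_add_distrib]
    refine Finset.sum_congr rfl fun c _ => ?_
    by_cases hp : pc c = 0
    · simp [hp]
    · have hppos : 0 < pc c := lt_of_le_of_ne (hpc0 c) (Ne.symm hp)
      have hspos : 0 < pc c + qc c := by have := hqc0 c; linarith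
      rw [if_neg hp, if_neg hp,
        show pc c / ((pc c + qc c) / 2) = 2 * (pc c / (pc c + qc c)) by
          field_simp,
        Real.log_mul two_ne_zero (by positivity)]
      ring
  have hKLq : klDiv qc (fun c => (pc c + qc c) / 2) =
      (∑ c, (if qc c = 0 then 0 else qc c * Real.log (qc c / (pc c + qc c)))) + Real.log 2 := by
    unfold klDiv
    rw [show Real.log 2 = (∑ c, qc c * Real.log 2) by
      rw [← Finset.sum_mul, hqc1, one_mul], ← Finset.sum_add_distrib]
    refine Finset.sum_congr rfl fun c _ => ?_
    by_cases hq : qc c = 0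
    · simp [hq]
    · have hqpos : 0 < qc c := lt_of_le_of_ne (hqc0 c) (Ne.symm hq)
      have hspos : 0 < pc c + qc c := by have := hpc0 c; linarith
      rw [if_neg hq, if_neg hq,
        show qc c / ((pc c + qc c) / 2) = 2 * (qc c / (pc c + qc c)) by
          field_simp,
        Real.log_mul two_ne_zero (by positivity)]
      ring
  have hsplit : ∑ c, g c =
      (∑ c, (if pc c = 0 then 0 else pc c * Real.log (pc c / (pc c + qc c)))) +
      (∑ c, (if qc c = 0 then 0 else qc c * Real.log (qc c / (pc c + qc c)))) := by
    rw [← Finset.sum_add_distrib]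
  rw [hCG, jsDiv, hKLp, hKLq, hsplit, hlog4]
  ring
end

section
/- Let C and X be finite types, let p_c and q_c be pmfs on C, and for each c : C let P c and Q c be pmfs on X. For each c with p_c c + q_c c > 0, define the mixture pmf M c on X by M c x = (p_c c * P c x + q_c c * Q c x) / (p_c c + q_c c). Then C(G) = ( − log 4 + 2 * D_JS(p_c ‖ q_c) ) + Σ_{c : C} p_c c * D_KL(P c ‖ M c) + Σ_{c : C} q_c c * D_KL(Q c ‖ M c), where summands whose pmf coefficient (p_c c or q_c c) is 0 are taken to be 0. -/
open Finset

/-- The weakly supervised GAN criterion `C(G)`: the GAN objective at the optimal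
discriminator, for joint densities `p(c,x) = p_c c * P c x` and `q(c,x) = q_c c * Q c x`.
Summands with zero numerator are taken to be `0`, and only points with
`p(c,x) + q(c,x) > 0` contribute. -/
lemma partA {X : Type*} [Fintype X] (a b : ℝ) (ha : 0 ≤ a) (hb : 0 ≤ b)
    (P Q : X → ℝ) (hP0 : ∀ x, 0 ≤ P x) (hP1 : ∑ x, P x = 1) (hQ0 : ∀ x, 0 ≤ Q x)
    (M : X → ℝ) (hM : 0 < a + b → ∀ x, M x = (a * P x + b * Q x) / (a + b)) :
    (∑ x, if a * P x = 0 then 0 else a * P x * Real.log (a * P x / (a * P x + b * Q x)))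
      = if a = 0 then 0 else a * Real.log (a / (a + b)) + a * klDiv P M := by
  by_cases ha0 : a = 0
  · simp [ha0]
  have ha' : 0 < a := lt_of_le_of_ne ha (Ne.symm ha0)
  have hs : 0 < a + b := by linarith
  rw [if_neg ha0]
  have key : ∀ x, (if a * P x = 0 then 0 else
      a * P x * Real.log (a * P x / (a * P x + b * Q x)))
      = a * P x * Real.log (a / (a + b)) +
        a * (if P x = 0 then 0 else P x * Real.log (P x / M x)) := by
    intro x
    by_cases hPx : P x = 0
    · simp [hPx]
    have hPx' : 0 < P x := lt_of_le_of_ne (hP0 x) (Ne.symm hPx)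
    have haP : 0 < a * P x := by positivity
    have hbQ : 0 ≤ b * Q x := by
      have := hQ0 x; positivity
    have hden : 0 < a * P x + b * Q x := by linarith
    have hMx : 0 < M x := by
      rw [hM hs x]; positivity
    rw [if_neg (by positivity), if_neg hPx]
    have hfac : a * P x / (a * P x + b * Q x) = (a / (a + b)) * (P x / M x) := by
      rw [hM hs x]
      field_simp
    rw [hfac, Real.log_mul (by positivity) (by positivity)]
    ring
  rw [Finset.sum_congr rfl (fun x _ => key x), Finset.sum_add_distrib]
  congr 1
  · rw [← Finset.sum_mul]
    have : ∑ x, a * P x = a := by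
      rw [← Finset.mul_sum, hP1, mul_one]
    rw [this]
  · rw [klDiv, Finset.mul_sum]

lemma lemB {C : Type*} [Fintype C] (p q : C → ℝ) (hp : ∀ c, 0 ≤ p c)
    (hq : ∀ c, 0 ≤ q c) (hp1 : ∑ c, p c = 1) :
    klDiv p (fun c => (p c + q c) / 2)
      = (∑ c, if p c = 0 then 0 else p c * Real.log (p c / (p c + q c))) + Real.log 2 := by
  rw [klDiv]
  have key : ∀ c, (if p c = 0 then 0 else p c * Real.log (p c / ((p c + q c) / 2)))
      = (if p c = 0 then 0 else p c * Real.log (p c / (p c + q c))) + p c * Real.log 2 := by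
    intro c
    by_cases h : p c = 0
    · simp [h]
    have hp' : 0 < p c := lt_of_le_of_ne (hp c) (Ne.symm h)
    have hs : 0 < p c + q c := by have := hq c; linarith
    rw [if_neg h, if_neg h]
    have : Real.log (p c / ((p c + q c) / 2))
        = Real.log (p c / (p c + q c)) + Real.log 2 := by
      rw [Real.log_div hp'.ne' (by positivity), Real.log_div hp'.ne' hs.ne',
        Real.log_div hs.ne' two_ne_zero]
      ring
    rw [this]; ring
  rw [Finset.sum_congr rfl (fun c _ => key c), Finset.sum_add_distrib, ← Finset.sum_mul,
    hp1, one_mul]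

/-- The central computation in the proof sketch of Theorem 2:
`C(G) = (− log 4 + 2 D_JS(p_c ‖ q_c)) + Σ_c p_c c * D_KL(P c ‖ M c) + Σ_c q_c c * D_KL(Q c ‖ M c)`,
where `M c` is the mixture `(p_c c * P c + q_c c * Q c) / (p_c c + q_c c)`. -/
theorem CG_decomposition
    {C X : Type*} [Fintype C] [Fintype X]
    (pc qc : C → ℝ)
    (hpc0 : ∀ c, 0 ≤ pc c) (hpc1 : ∑ c, pc c = 1)
    (hqc0 : ∀ c, 0 ≤ qc c) (hqc1 : ∑ c, qc c = 1)
    (P Q : C → X → ℝ)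
    (hP0 : ∀ c x, 0 ≤ P c x) (hP1 : ∀ c, ∑ x, P c x = 1)
    (hQ0 : ∀ c x, 0 ≤ Q c x) (hQ1 : ∀ c, ∑ x, Q c x = 1)
    (M : C → X → ℝ)
    (hM : ∀ c, 0 < pc c + qc c →
      ∀ x, M c x = (pc c * P c x + qc c * Q c x) / (pc c + qc c)) :
    CG pc qc P Q =
      (-Real.log 4 + 2 * jsDiv pc qc) +
        (∑ c, if pc c = 0 then 0 else pc c * klDiv (P c) (M c)) +
        (∑ c, if qc c = 0 then 0 else qc c * klDiv (Q c) (M c)) := by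
  have h4 : Real.log 4 = 2 * Real.log 2 := by
    rw [show (4:ℝ) = 2^2 by norm_num, Real.log_pow]; push_cast; ring
  -- drop the outer if in CG
  have drop : ∀ c x,
      (if 0 < pc c * P c x + qc c * Q c x then
        (if pc c * P c x = 0 then 0 else
          pc c * P c x * Real.log (pc c * P c x / (pc c * P c x + qc c * Q c x))) +
        (if qc c * Q c x = 0 then 0 else
          qc c * Q c x * Real.log (qc c * Q c x / (pc c * P c x + qc c * Q c x)))
      else 0)
      = (if pc c * P c x = 0 then 0 else
          pc c * P c x * Real.log (pc c * P c x / (pc c * P c x + qc c * Q c x))) +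
        (if qc c * Q c x = 0 then 0 else
          qc c * Q c x * Real.log (qc c * Q c x / (pc c * P c x + qc c * Q c x))) := by
    intro c x
    split
    · rfl
    · rename_i h
      push_neg at h
      have hap : 0 ≤ pc c * P c x := mul_nonneg (hpc0 c) (hP0 c x)
      have hbq : 0 ≤ qc c * Q c x := mul_nonneg (hqc0 c) (hQ0 c x)
      have h1 : pc c * P c x = 0 := le_antisymm (by linarith) hap
      have h2 : qc c * Q c x = 0 := le_antisymm (by linarith) hbq
      simp [h1, h2]
  have hA : ∀ c, (∑ x, if pc c * P c x = 0 then 0 else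
      pc c * P c x * Real.log (pc c * P c x / (pc c * P c x + qc c * Q c x)))
      = if pc c = 0 then 0 else
        pc c * Real.log (pc c / (pc c + qc c)) + pc c * klDiv (P c) (M c) :=
    fun c => partA (pc c) (qc c) (hpc0 c) (hqc0 c) (P c) (Q c) (hP0 c) (hP1 c)
      (hQ0 c) (M c) (hM c)
  have hB : ∀ c, (∑ x, if qc c * Q c x = 0 then 0 else
      qc c * Q c x * Real.log (qc c * Q c x / (pc c * P c x + qc c * Q c x)))
      = if qc c = 0 then 0 else
        qc c * Real.log (qc c / (pc c + qc c)) + qc c * klDiv (Q c) (M c) := by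
    intro c
    have := partA (qc c) (pc c) (hqc0 c) (hpc0 c) (Q c) (P c) (hQ0 c) (hQ1 c)
      (hP0 c) (M c) (fun h x => by rw [hM c (by linarith) x]; ring)
    simpa [add_comm] using this
  have hCG : CG pc qc P Q =
      (∑ c, (if pc c = 0 then 0 else pc c * Real.log (pc c / (pc c + qc c))))
      + (∑ c, (if pc c = 0 then 0 else pc c * klDiv (P c) (M c)))
      + ((∑ c, (if qc c = 0 then 0 else qc c * Real.log (qc c / (pc c + qc c))))
      + (∑ c, (if qc c = 0 then 0 else qc c * klDiv (Q c) (M c)))) := by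
    rw [CG]
    rw [Finset.sum_congr rfl (fun c _ => Finset.sum_congr rfl (fun x _ => drop c x))]
    simp only [Finset.sum_add_distrib]
    rw [Finset.sum_congr rfl (fun c _ => hA c), Finset.sum_congr rfl (fun c _ => hB c)]
    have splitp : ∀ c, (if pc c = 0 then 0 else
        pc c * Real.log (pc c / (pc c + qc c)) + pc c * klDiv (P c) (M c))
        = (if pc c = 0 then 0 else pc c * Real.log (pc c / (pc c + qc c)))
          + (if pc c = 0 then 0 else pc c * klDiv (P c) (M c)) := by
      intro c; split <;> simp
    have splitq : ∀ c, (if qc c = 0 then 0 else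
        qc c * Real.log (qc c / (pc c + qc c)) + qc c * klDiv (Q c) (M c))
        = (if qc c = 0 then 0 else qc c * Real.log (qc c / (pc c + qc c)))
          + (if qc c = 0 then 0 else qc c * klDiv (Q c) (M c)) := by
      intro c; split <;> simp
    rw [Finset.sum_congr rfl (fun c _ => splitp c),
      Finset.sum_congr rfl (fun c _ => splitq c),
      Finset.sum_add_distrib, Finset.sum_add_distrib]
  have hjs : 2 * jsDiv pc qc =
      klDiv pc (fun c => (pc c + qc c) / 2) + klDiv qc (fun c => (pc c + qc c) / 2) := by
    rw [jsDiv]; ring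
  have hq2 : klDiv qc (fun c => (pc c + qc c) / 2)
      = klDiv qc (fun c => (qc c + pc c) / 2) := by
    congr 1; funext c; ring
  have e1 := lemB pc qc hpc0 hqc0 hpc1
  have e2 := lemB qc pc hqc0 hpc0 hqc1
  have e2' : (klDiv qc fun c => (qc c + pc c) / 2)
      = (∑ c, if qc c = 0 then 0 else qc c * Real.log (qc c / (pc c + qc c))) + Real.log 2 := by
    rw [e2]
    congr 1
    exact Finset.sum_congr rfl (fun c _ => by rw [add_comm (qc c) (pc c)])
  rw [hCG, hjs, e1, hq2, e2']
  linarith [h4]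
end

section
/- Let C and X be finite types, let p_c and q_c be pmfs on C, and for each c : C let P c and Q c be pmfs on X. Then C(G) ≥ − log 4 + 2 * D_JS(p_c ‖ q_c). -/
open Finset

lemma log_ge_one_sub_inv {t : ℝ} (ht : 0 < t) : 1 - 1/t ≤ Real.log t := by
  have h := Real.log_le_sub_one_of_pos (x := 1/t) (by positivity)
  rw [one_div, Real.log_inv] at h
  rw [one_div]
  linarith

lemma log_sum_ineq {X : Type*} [Fintype X] (a b : X → ℝ)
    (ha : ∀ x, 0 ≤ a x) (hb : ∀ x, 0 ≤ b x) (hab : ∀ x, a x ≠ 0 → 0 < b x) :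
    (if (∑ x, a x) = 0 then 0 else (∑ x, a x) * Real.log ((∑ x, a x) / (∑ x, b x)))
      ≤ ∑ x, if a x = 0 then 0 else a x * Real.log (a x / b x) := by
  set A := ∑ x, a x with hAdef
  set B := ∑ x, b x with hBdef
  by_cases hA : A = 0
  · rw [if_pos hA]
    have hz : ∀ x, a x = 0 := by
      intro x
      exact (Finset.sum_eq_zero_iff_of_nonneg (fun x _ => ha x)).mp hA x (mem_univ x)
    rw [Finset.sum_eq_zero (fun x _ => by simp [hz x])]
  · rw [if_neg hA]
    have hApos : 0 < A := lt_of_le_of_ne (Finset.sum_nonneg fun x _ => ha x) (Ne.symm hA)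
    obtain ⟨x0, hx0⟩ : ∃ x, a x ≠ 0 := by
      by_contra h
      push_neg at h
      exact hA (Finset.sum_eq_zero fun x _ => h x)
    have hBpos : 0 < B :=
      lt_of_lt_of_le (hab x0 hx0) (Finset.single_le_sum (fun x _ => hb x) (mem_univ x0))
    set s := Finset.univ.filter (fun x => a x ≠ 0) with hs
    have hLHS : (∑ x, if a x = 0 then 0 else a x * Real.log (a x / b x))
        = ∑ x ∈ s, a x * Real.log (a x / b x) := by
      rw [hs, Finset.sum_filter]
      exact Finset.sum_congr rfl fun x _ => by by_cases h : a x = 0 <;> simp [h]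
    have hAs : ∑ x ∈ s, a x = A := by
      rw [hs]
      exact Finset.sum_filter_ne_zero _
    have key : ∀ x ∈ s, a x * Real.log (A/B) + (a x - b x * (A/B)) ≤ a x * Real.log (a x / b x) := by
      intro x hx
      have hax : 0 < a x := lt_of_le_of_ne (ha x) (Ne.symm (by simpa [hs] using hx))
      have hbx : 0 < b x := hab x (by simpa [hs] using hx)
      have hlog : Real.log (a x / b x) = Real.log (a x * B / (b x * A)) + Real.log (A / B) := by
        rw [← Real.log_mul (by positivity) (by positivity)]
        congr 1
        field_simp
      have h1 : 1 - (b x * A) / (a x * B) ≤ Real.log (a x * B / (b x * A)) := by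
        have := log_ge_one_sub_inv (t := a x * B / (b x * A)) (by positivity)
        rwa [one_div_div] at this
      have h2 : a x * (1 - (b x * A) / (a x * B)) = a x - b x * (A/B) := by
        field_simp
      nlinarith [mul_le_mul_of_nonneg_left h1 hax.le]
    have h1 : ∑ x ∈ s, (a x * Real.log (A/B) + (a x - b x * (A/B)))
        ≤ ∑ x ∈ s, a x * Real.log (a x / b x) := Finset.sum_le_sum key
    have h2 : ∑ x ∈ s, (a x * Real.log (A/B) + (a x - b x * (A/B)))
        = A * Real.log (A/B) + (A - (∑ x ∈ s, b x) * (A/B)) := by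
      rw [Finset.sum_add_distrib, ← Finset.sum_mul, Finset.sum_sub_distrib,
        ← Finset.sum_mul, hAs]
    have h3 : (∑ x ∈ s, b x) ≤ B :=
      Finset.sum_le_sum_of_subset_of_nonneg (Finset.filter_subset _ _) (fun x _ _ => hb x)
    have h4 : (∑ x ∈ s, b x) * (A/B) ≤ B * (A/B) :=
      mul_le_mul_of_nonneg_right h3 (by positivity)
    have h5 : B * (A/B) = A := by field_simp
    rw [hLHS]
    linarith

/-- Theorem 2, lower-bound half: the weakly supervised GAN criterion satisfies
`C(G) ≥ − log 4 + 2 * D_JS(p_c ‖ q_c)`. -/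
theorem CG_lower_bound
    {C X : Type*} [Fintype C] [Fintype X]
    (pc qc : C → ℝ)
    (hpc0 : ∀ c, 0 ≤ pc c) (hpc1 : ∑ c, pc c = 1)
    (hqc0 : ∀ c, 0 ≤ qc c) (hqc1 : ∑ c, qc c = 1)
    (P Q : C → X → ℝ)
    (hP0 : ∀ c x, 0 ≤ P c x) (hP1 : ∀ c, ∑ x, P c x = 1)
    (hQ0 : ∀ c x, 0 ≤ Q c x) (hQ1 : ∀ c, ∑ x, Q c x = 1) :
    CG pc qc P Q ≥ -Real.log 4 + 2 * jsDiv pc qc := by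
  classical
  have hterm : ∀ c x,
      (if 0 < pc c * P c x + qc c * Q c x then
        (if pc c * P c x = 0 then 0 else
          pc c * P c x * Real.log (pc c * P c x / (pc c * P c x + qc c * Q c x))) +
        (if qc c * Q c x = 0 then 0 else
          qc c * Q c x * Real.log (qc c * Q c x / (pc c * P c x + qc c * Q c x)))
      else 0)
      = ((if pc c * P c x = 0 then 0 else
          pc c * P c x * Real.log (pc c * P c x / ((pc c * P c x + qc c * Q c x)/2)))
        - pc c * P c x * Real.log 2)
      + ((if qc c * Q c x = 0 then 0 else
          qc c * Q c x * Real.log (qc c * Q c x / ((pc c * P c x + qc c * Q c x)/2)))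
        - qc c * Q c x * Real.log 2) := by
    intro c x
    set p := pc c * P c x with hp
    set q := qc c * Q c x with hq
    have hp0 : 0 ≤ p := mul_nonneg (hpc0 c) (hP0 c x)
    have hq0 : 0 ≤ q := mul_nonneg (hqc0 c) (hQ0 c x)
    by_cases hpq : 0 < p + q
    · rw [if_pos hpq]
      have hlog : ∀ r : ℝ, 0 < r →
          r * Real.log (r / (p+q)) = r * Real.log (r / ((p+q)/2)) - r * Real.log 2 := by
        intro r hr
        have hd : r / ((p+q)/2) = (r/(p+q)) * 2 := by
          field_simp
        rw [hd, Real.log_mul (by positivity) two_ne_zero]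
        ring
      have e1 : (if p = 0 then 0 else p * Real.log (p/(p+q)))
          = (if p = 0 then 0 else p * Real.log (p/((p+q)/2))) - p * Real.log 2 := by
        by_cases hpz : p = 0
        · simp [hpz]
        · rw [if_neg hpz, if_neg hpz]
          exact hlog p (lt_of_le_of_ne hp0 (Ne.symm hpz))
      have e2 : (if q = 0 then 0 else q * Real.log (q/(p+q)))
          = (if q = 0 then 0 else q * Real.log (q/((p+q)/2))) - q * Real.log 2 := by
        by_cases hqz : q = 0
        · simp [hqz]
        · rw [if_neg hqz, if_neg hqz]
          exact hlog q (lt_of_le_of_ne hq0 (Ne.symm hqz))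
      rw [e1, e2]
    · rw [if_neg hpq]
      rw [not_lt] at hpq
      have hpz : p = 0 := le_antisymm (by linarith) hp0
      have hqz : q = 0 := le_antisymm (by linarith) hq0
      simp [hpz, hqz]
  have hsump : (∑ c, ∑ x, pc c * P c x) = 1 := by
    have : ∀ c : C, (∑ x, pc c * P c x) = pc c := fun c => by
      rw [← Finset.mul_sum, hP1, mul_one]
    rw [Finset.sum_congr rfl fun c _ => this c, hpc1]
  have hsumq : (∑ c, ∑ x, qc c * Q c x) = 1 := by
    have : ∀ c : C, (∑ x, qc c * Q c x) = qc c := fun c => by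
      rw [← Finset.mul_sum, hQ1, mul_one]
    rw [Finset.sum_congr rfl fun c _ => this c, hqc1]
  have hCG : CG pc qc P Q
      = (∑ c, ∑ x, if pc c * P c x = 0 then 0 else
          pc c * P c x * Real.log (pc c * P c x / ((pc c * P c x + qc c * Q c x)/2)))
      + (∑ c, ∑ x, if qc c * Q c x = 0 then 0 else
          qc c * Q c x * Real.log (qc c * Q c x / ((pc c * P c x + qc c * Q c x)/2)))
      - 2 * Real.log 2 := by
    rw [CG]
    rw [Finset.sum_congr rfl fun c _ => Finset.sum_congr rfl fun x _ => hterm c x]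
    simp only [Finset.sum_add_distrib, Finset.sum_sub_distrib, ← Finset.sum_mul]
    rw [hsump, hsumq]
    ring
  have hApart : klDiv pc (fun c => (pc c + qc c)/2)
      ≤ ∑ c, ∑ x, if pc c * P c x = 0 then 0 else
          pc c * P c x * Real.log (pc c * P c x / ((pc c * P c x + qc c * Q c x)/2)) := by
    rw [klDiv]
    apply Finset.sum_le_sum
    intro c _
    have hineq := log_sum_ineq (a := fun x => pc c * P c x)
      (b := fun x => (pc c * P c x + qc c * Q c x)/2)
      (fun x => mul_nonneg (hpc0 c) (hP0 c x))
      (fun x => by have := mul_nonneg (hpc0 c) (hP0 c x);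
                   have := mul_nonneg (hqc0 c) (hQ0 c x); positivity)
      (fun x hx => by
        have h1 : 0 < pc c * P c x := lt_of_le_of_ne (mul_nonneg (hpc0 c) (hP0 c x)) (Ne.symm hx)
        have h2 := mul_nonneg (hqc0 c) (hQ0 c x)
        linarith)
    have hA : (∑ x, pc c * P c x) = pc c := by rw [← Finset.mul_sum, hP1, mul_one]
    have hB : (∑ x, (pc c * P c x + qc c * Q c x)/2) = (pc c + qc c)/2 := by
      rw [← Finset.sum_div, Finset.sum_add_distrib, ← Finset.mul_sum, ← Finset.mul_sum,
        hP1, hQ1, mul_one, mul_one]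
    rw [hA, hB] at hineq
    exact hineq
  have hBpart : klDiv qc (fun c => (pc c + qc c)/2)
      ≤ ∑ c, ∑ x, if qc c * Q c x = 0 then 0 else
          qc c * Q c x * Real.log (qc c * Q c x / ((pc c * P c x + qc c * Q c x)/2)) := by
    rw [klDiv]
    apply Finset.sum_le_sum
    intro c _
    have hineq := log_sum_ineq (a := fun x => qc c * Q c x)
      (b := fun x => (pc c * P c x + qc c * Q c x)/2)
      (fun x => mul_nonneg (hqc0 c) (hQ0 c x))
      (fun x => by have := mul_nonneg (hpc0 c) (hP0 c x);
                   have := mul_nonneg (hqc0 c) (hQ0 c x); positivity)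
      (fun x hx => by
        have h1 : 0 < qc c * Q c x := lt_of_le_of_ne (mul_nonneg (hqc0 c) (hQ0 c x)) (Ne.symm hx)
        have h2 := mul_nonneg (hpc0 c) (hP0 c x)
        linarith)
    have hA : (∑ x, qc c * Q c x) = qc c := by rw [← Finset.mul_sum, hQ1, mul_one]
    have hB : (∑ x, (pc c * P c x + qc c * Q c x)/2) = (pc c + qc c)/2 := by
      rw [← Finset.sum_div, Finset.sum_add_distrib, ← Finset.mul_sum, ← Finset.mul_sum,
        hP1, hQ1, mul_one, mul_one]
    rw [hA, hB] at hineq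
    exact hineq
  have hlog4 : Real.log 4 = 2 * Real.log 2 := by
    rw [show (4:ℝ) = 2^2 by norm_num, Real.log_pow]
    push_cast
    ring
  rw [ge_iff_le, hCG, jsDiv, hlog4]
  linarith
end

section
/- Let C and X be finite types, let p_c and q_c be pmfs on C, and for each c : C let P c and Q c be pmfs on X. Then C(G) = − log 4 + 2 * D_JS(p_c ‖ q_c) if and only if P c = Q c for every c : C with p_c c > 0 and q_c c > 0. In particular, if p_c c > 0 and q_c c > 0 for all c, then the global minimum − log 4 + 2 * D_JS(p_c ‖ q_c) of C(G) is achieved if and only if P c = Q c for all c : C. -/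
open Finset

noncomputable def fAux (a b : ℝ) : ℝ :=
  (if a = 0 then 0 else a * Real.log (a / (a + b))) +
  (if b = 0 then 0 else b * Real.log (b / (a + b)))

private lemma sum_ite_ne_zero' {α : Type*} [Fintype α] (u : α → ℝ) :
    ∑ x, (if u x = 0 then 0 else u x) = ∑ x, u x :=
  Finset.sum_congr rfl fun x _ => by split <;> simp_all

private lemma klDiv_nonneg_and_eq {X : Type*} [Fintype X] (u m : X → ℝ)
    (hu0 : ∀ x, 0 ≤ u x) (hu1 : ∑ x, u x = 1)
    (hm0 : ∀ x, 0 ≤ m x) (hm1 : ∑ x, m x = 1)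
    (hs : ∀ x, u x ≠ 0 → m x ≠ 0) :
    0 ≤ klDiv u m ∧ (klDiv u m = 0 ↔ u = m) := by
  classical
  set s : Finset X := Finset.univ.filter (fun x => u x ≠ 0) with hsdef
  have hmem : ∀ x, x ∈ s ↔ u x ≠ 0 := fun x => by simp [hsdef]
  have h1 : klDiv u m = ∑ x ∈ s, u x * Real.log (u x / m x) := by
    rw [klDiv, hsdef, Finset.sum_filter]
    exact Finset.sum_congr rfl fun x _ => by by_cases h : u x = 0 <;> simp [h]
  have hupos : ∀ x ∈ s, 0 < u x := fun x hx =>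
    (hu0 x).lt_of_ne (Ne.symm ((hmem x).1 hx))
  have hmpos : ∀ x ∈ s, 0 < m x := fun x hx =>
    (hm0 x).lt_of_ne (Ne.symm (hs x ((hmem x).1 hx)))
  have key : ∀ x ∈ s, u x - m x ≤ u x * Real.log (u x / m x) := by
    intro x hx
    have hux := hupos x hx; have hmx := hmpos x hx
    have h := Real.log_le_sub_one_of_pos (div_pos hmx hux)
    have hrw : Real.log (u x / m x) = -Real.log (m x / u x) := by
      rw [← Real.log_inv, inv_div]
    have h2 := mul_le_mul_of_nonneg_left h hux.le
    have h3 : u x * (m x / u x - 1) = m x - u x := by field_simp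
    rw [hrw, mul_neg]; linarith
  have keylt : ∀ x ∈ s, u x ≠ m x → u x - m x < u x * Real.log (u x / m x) := by
    intro x hx hne
    have hux := hupos x hx; have hmx := hmpos x hx
    have hne1 : m x / u x ≠ 1 := by
      intro h
      exact hne ((div_eq_one_iff_eq hux.ne').1 h).symm
    have h := Real.log_lt_sub_one_of_pos (div_pos hmx hux) hne1
    have hrw : Real.log (u x / m x) = -Real.log (m x / u x) := by
      rw [← Real.log_inv, inv_div]
    have h2 := mul_lt_mul_of_pos_left h hux
    have h3 : u x * (m x / u x - 1) = m x - u x := by field_simp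
    rw [hrw, mul_neg]; linarith
  have hsu : ∑ x ∈ s, u x = 1 := by
    rw [hsdef, Finset.sum_filter_ne_zero, hu1]
  have hsm : ∑ x ∈ s, m x ≤ 1 := by
    rw [← hm1]
    exact Finset.sum_le_sum_of_subset_of_nonneg (Finset.filter_subset _ _)
      (fun x _ _ => hm0 x)
  have hge : (1 : ℝ) - ∑ x ∈ s, m x ≤ ∑ x ∈ s, u x * Real.log (u x / m x) := by
    calc (1:ℝ) - ∑ x ∈ s, m x = ∑ x ∈ s, (u x - m x) := by
          rw [Finset.sum_sub_distrib, hsu]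
      _ ≤ _ := Finset.sum_le_sum key
  refine ⟨by rw [h1]; linarith, ?_, ?_⟩
  · intro h0
    rw [h1] at h0
    have hsm1 : ∑ x ∈ s, m x = 1 := le_antisymm hsm (by linarith)
    have hzero : ∑ x ∈ s, (u x * Real.log (u x / m x) - (u x - m x)) = 0 := by
      rw [Finset.sum_sub_distrib, h0, Finset.sum_sub_distrib, hsu, hsm1]; ring
    have heach := (Finset.sum_eq_zero_iff_of_nonneg
      (fun x hx => sub_nonneg.mpr (key x hx))).1 hzero
    have hmzero : ∀ x, x ∉ s → m x = 0 := by
      intro x hx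
      have h4 := Finset.sum_sdiff (f := m) (Finset.filter_subset (fun x => u x ≠ 0) Finset.univ)
      have h5 : ∑ y ∈ Finset.univ \ s, m y = 0 := by
        rw [hsdef] at hsm1 ⊢; rw [hsm1, hm1] at h4; linarith
      have := (Finset.sum_eq_zero_iff_of_nonneg (fun y _ => hm0 y)).1 h5
      exact this x (Finset.mem_sdiff.mpr ⟨Finset.mem_univ x, hx⟩)
    funext x
    by_cases hx : x ∈ s
    · by_contra hne
      have h6 := keylt x hx hne
      have h7 := heach x hx
      linarith
    · have hu : u x = 0 := by
        by_contra h; exact hx ((hmem x).2 h)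
      rw [hu, hmzero x hx]
  · intro h; subst h
    rw [klDiv]
    refine Finset.sum_eq_zero fun x _ => ?_
    split_ifs with h
    · rfl
    · rw [div_self h, Real.log_one, mul_zero]

private lemma sum_fAux_decomp {X : Type*} [Fintype X] (a b : ℝ) (ha : 0 < a) (hb : 0 < b)
    (u v : X → ℝ) (hu0 : ∀ x, 0 ≤ u x) (hu1 : ∑ x, u x = 1)
    (hv0 : ∀ x, 0 ≤ v x) (hv1 : ∑ x, v x = 1) :
    ∑ x, fAux (a * u x) (b * v x)
      = fAux a b + a * klDiv u (fun x => (a * u x + b * v x) / (a + b))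
        + b * klDiv v (fun x => (a * u x + b * v x) / (a + b)) := by
  have hab : 0 < a + b := by linarith
  have hterm : ∀ x, fAux (a * u x) (b * v x) =
      ((if u x = 0 then 0 else u x) * (a * Real.log (a / (a + b)))
        + a * (if u x = 0 then 0 else u x * Real.log (u x / ((a * u x + b * v x) / (a + b)))))
      + ((if v x = 0 then 0 else v x) * (b * Real.log (b / (a + b)))
        + b * (if v x = 0 then 0 else v x * Real.log (v x / ((a * u x + b * v x) / (a + b))))) := by
    intro x
    rw [fAux]
    congr 1
    · by_cases h : u x = 0
      · simp [h]
      · have hux : 0 < u x := (hu0 x).lt_of_ne (Ne.symm h)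
        have hden : 0 < a * u x + b * v x := by nlinarith [hv0 x]
        have hmx : 0 < (a * u x + b * v x) / (a + b) := div_pos hden hab
        simp only [if_neg h, if_neg (by positivity : a * u x ≠ 0)]
        have hprod : a * u x / (a * u x + b * v x)
            = (a / (a + b)) * (u x / ((a * u x + b * v x) / (a + b))) := by
          field_simp
        rw [hprod, Real.log_mul (by positivity) (ne_of_gt (div_pos hux hmx))]
        ring
    · by_cases h : v x = 0
      · simp [h]
      · have hvx : 0 < v x := (hv0 x).lt_of_ne (Ne.symm h)
        have hden : 0 < a * u x + b * v x := by nlinarith [hu0 x]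
        have hmx : 0 < (a * u x + b * v x) / (a + b) := div_pos hden hab
        simp only [if_neg h, if_neg (by positivity : b * v x ≠ 0)]
        have hprod : b * v x / (a * u x + b * v x)
            = (b / (a + b)) * (v x / ((a * u x + b * v x) / (a + b))) := by
          field_simp
        rw [hprod, Real.log_mul (by positivity) (ne_of_gt (div_pos hvx hmx))]
        ring
  rw [Finset.sum_congr rfl fun x _ => hterm x]
  rw [klDiv, klDiv]
  rw [show fAux a b = a * Real.log (a / (a + b)) + b * Real.log (b / (a + b)) from by
    rw [fAux, if_neg ha.ne', if_neg hb.ne']]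
  simp only [Finset.sum_add_distrib, ← Finset.sum_mul, ← Finset.mul_sum,
    sum_ite_ne_zero', hu1, hv1]
  ring

private lemma perc {X : Type*} [Fintype X] (a b : ℝ) (ha : 0 ≤ a) (hb : 0 ≤ b)
    (u v : X → ℝ) (hu0 : ∀ x, 0 ≤ u x) (hu1 : ∑ x, u x = 1)
    (hv0 : ∀ x, 0 ≤ v x) (hv1 : ∑ x, v x = 1) :
    fAux a b ≤ ∑ x, fAux (a * u x) (b * v x) ∧
    (∑ x, fAux (a * u x) (b * v x) = fAux a b ↔ (0 < a → 0 < b → u = v)) := by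
  rcases eq_or_lt_of_le ha with ha0 | ha
  · have hz : ∀ x ∈ Finset.univ, fAux (a * u x) (b * v x) = 0 := by
      intro x _
      rw [fAux, ← ha0, zero_mul, if_pos rfl, zero_add, zero_add]
      split_ifs with h
      · rfl
      · rw [div_self h, Real.log_one, mul_zero]
    have hz2 : fAux a b = 0 := by
      rw [fAux, ← ha0, if_pos rfl, zero_add, zero_add]
      split_ifs with h
      · rfl
      · rw [div_self h, Real.log_one, mul_zero]
    rw [Finset.sum_eq_zero hz, hz2]
    exact ⟨le_refl 0, by simp [← ha0]⟩
  rcases eq_or_lt_of_le hb with hb0 | hb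
  · have hz : ∀ x ∈ Finset.univ, fAux (a * u x) (b * v x) = 0 := by
      intro x _
      rw [fAux, ← hb0, zero_mul, if_pos rfl, add_zero, add_zero]
      split_ifs with h
      · rfl
      · rw [div_self h, Real.log_one, mul_zero]
    have hz2 : fAux a b = 0 := by
      rw [fAux, ← hb0, if_pos rfl, add_zero, add_zero]
      split_ifs with h
      · rfl
      · rw [div_self h, Real.log_one, mul_zero]
    rw [Finset.sum_eq_zero hz, hz2]
    exact ⟨le_refl 0, by simp [← hb0]⟩
  · -- both positive
    have hab : 0 < a + b := by linarith
    set m : X → ℝ := fun x => (a * u x + b * v x) / (a + b) with hm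
    have hm0 : ∀ x, 0 ≤ m x := fun x =>
      div_nonneg (by nlinarith [hu0 x, hv0 x, mul_nonneg ha.le (hu0 x), mul_nonneg hb.le (hv0 x)]) hab.le
    have hm1 : ∑ x, m x = 1 := by
      rw [hm]
      rw [← Finset.sum_div, Finset.sum_add_distrib, ← Finset.mul_sum, ← Finset.mul_sum,
        hu1, hv1, mul_one, mul_one, div_self hab.ne']
    have hsu : ∀ x, u x ≠ 0 → m x ≠ 0 := by
      intro x hx
      have hux : 0 < u x := (hu0 x).lt_of_ne (Ne.symm hx)
      have : 0 < a * u x + b * v x := by nlinarith [hv0 x]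
      exact (div_pos this hab).ne'
    have hsv : ∀ x, v x ≠ 0 → m x ≠ 0 := by
      intro x hx
      have hvx : 0 < v x := (hv0 x).lt_of_ne (Ne.symm hx)
      have : 0 < a * u x + b * v x := by nlinarith [hu0 x]
      exact (div_pos this hab).ne'
    have KLu := klDiv_nonneg_and_eq u m hu0 hu1 hm0 hm1 hsu
    have KLv := klDiv_nonneg_and_eq v m hv0 hv1 hm0 hm1 hsv
    have hdec := sum_fAux_decomp a b ha hb u v hu0 hu1 hv0 hv1
    rw [← hm] at hdec
    constructor
    · rw [hdec]
      nlinarith [KLu.1, KLv.1, mul_nonneg ha.le KLu.1, mul_nonneg hb.le KLv.1]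
    · constructor
      · intro h _ _
        rw [hdec] at h
        have h1 : a * klDiv u m + b * klDiv v m = 0 := by linarith
        have hKu : klDiv u m = 0 := by
          nlinarith [KLu.1, KLv.1, mul_nonneg ha.le KLu.1, mul_nonneg hb.le KLv.1]
        have hKv : klDiv v m = 0 := by
          nlinarith [KLu.1, KLv.1, mul_nonneg ha.le KLu.1, mul_nonneg hb.le KLv.1]
        have humeq := KLu.2.1 hKu
        have hvmeq := KLv.2.1 hKv
        rw [humeq, hvmeq]
      · intro h
        have huv : u = v := h ha hb
        have hmu : m = u := by
          funext x
          rw [hm, huv]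
          field_simp
        have hKu : klDiv u m = 0 := KLu.2.2 hmu.symm
        have hKv : klDiv v m = 0 := KLv.2.2 (by rw [hmu, huv])
        rw [hdec, hKu, hKv]
        ring

private lemma klDiv_half_eq {C : Type*} [Fintype C] (w w' m : C → ℝ)
    (hw0 : ∀ c, 0 ≤ w c) (hw1 : ∑ c, w c = 1) (hw'0 : ∀ c, 0 ≤ w' c)
    (hm : ∀ c, m c = (w c + w' c) / 2) :
    klDiv w m = Real.log 2
      + ∑ c, (if w c = 0 then 0 else w c * Real.log (w c / (w c + w' c))) := by
  have hterm : ∀ c, (if w c = 0 then 0 else w c * Real.log (w c / m c))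
      = (if w c = 0 then 0 else w c) * Real.log 2
        + (if w c = 0 then 0 else w c * Real.log (w c / (w c + w' c))) := by
    intro c
    by_cases h : w c = 0
    · simp [h]
    · have hwc : 0 < w c := (hw0 c).lt_of_ne (Ne.symm h)
      have hden : 0 < w c + w' c := by nlinarith [hw'0 c]
      have hprod : w c / m c = 2 * (w c / (w c + w' c)) := by
        rw [hm c]; field_simp
      simp only [if_neg h]
      rw [hprod, Real.log_mul two_ne_zero (ne_of_gt (div_pos hwc hden))]
      ring
  rw [klDiv, Finset.sum_congr rfl fun c _ => hterm c, Finset.sum_add_distrib,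
    ← Finset.sum_mul, sum_ite_ne_zero', hw1, one_mul]


/-- Theorem 2 of the paper: the global minimum `− log 4 + 2 D_JS(p_c ‖ q_c)` of `C(G)`
is achieved if and only if `P c = Q c` for every category `c` carrying positive weight
under both `p_c` and `q_c`; in particular, if all categories have positive weight,
the minimum is achieved iff `P c = Q c` for all `c`. -/
theorem CG_global_min_iff
    {C X : Type*} [Fintype C] [Fintype X]
    (pc qc : C → ℝ)
    (hpc0 : ∀ c, 0 ≤ pc c) (hpc1 : ∑ c, pc c = 1)
    (hqc0 : ∀ c, 0 ≤ qc c) (hqc1 : ∑ c, qc c = 1)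
    (P Q : C → X → ℝ)
    (hP0 : ∀ c x, 0 ≤ P c x) (hP1 : ∀ c, ∑ x, P c x = 1)
    (hQ0 : ∀ c x, 0 ≤ Q c x) (hQ1 : ∀ c, ∑ x, Q c x = 1) :
    (CG pc qc P Q = -Real.log 4 + 2 * jsDiv pc qc ↔
      ∀ c, 0 < pc c → 0 < qc c → P c = Q c) ∧
    ((∀ c, 0 < pc c ∧ 0 < qc c) →
      (CG pc qc P Q = -Real.log 4 + 2 * jsDiv pc qc ↔ ∀ c, P c = Q c)) := by
  have key : ∀ c, fAux (pc c) (qc c) ≤ ∑ x, fAux (pc c * P c x) (qc c * Q c x) ∧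
      (∑ x, fAux (pc c * P c x) (qc c * Q c x) = fAux (pc c) (qc c) ↔
        (0 < pc c → 0 < qc c → P c = Q c)) :=
    fun c => perc (pc c) (qc c) (hpc0 c) (hqc0 c) (P c) (Q c)
      (hP0 c) (hP1 c) (hQ0 c) (hQ1 c)
  have hCG : CG pc qc P Q = ∑ c, ∑ x, fAux (pc c * P c x) (qc c * Q c x) := by
    rw [CG]
    refine Finset.sum_congr rfl fun c _ => Finset.sum_congr rfl fun x _ => ?_
    have hp : 0 ≤ pc c * P c x := mul_nonneg (hpc0 c) (hP0 c x)
    have hq : 0 ≤ qc c * Q c x := mul_nonneg (hqc0 c) (hQ0 c x)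
    by_cases h : 0 < pc c * P c x + qc c * Q c x
    · rw [if_pos h, fAux]
    · have h' := not_lt.1 h
      have hp0 : pc c * P c x = 0 := le_antisymm (by linarith) hp
      have hq0 : qc c * Q c x = 0 := le_antisymm (by linarith) hq
      rw [if_neg h, fAux, hp0, hq0]; simp
  have hRHS : -Real.log 4 + 2 * jsDiv pc qc = ∑ c, fAux (pc c) (qc c) := by
    have h4 : Real.log 4 = 2 * Real.log 2 := by
      rw [show (4:ℝ) = 2 ^ 2 by norm_num, Real.log_pow]
      push_cast; ring
    have hk1 := klDiv_half_eq pc qc (fun c => (pc c + qc c) / 2) hpc0 hpc1 hqc0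
      (fun c => rfl)
    have hk2 := klDiv_half_eq qc pc (fun c => (pc c + qc c) / 2) hqc0 hqc1 hpc0
      (fun c => by ring)
    rw [jsDiv, hk1, hk2, h4]
    rw [show ∑ c, fAux (pc c) (qc c)
        = ∑ c, ((if pc c = 0 then 0 else pc c * Real.log (pc c / (pc c + qc c)))
          + (if qc c = 0 then 0 else qc c * Real.log (qc c / (qc c + pc c)))) from
      Finset.sum_congr rfl fun c _ => by rw [fAux, add_comm (pc c) (qc c)]]
    rw [Finset.sum_add_distrib]
    ring
  have main : CG pc qc P Q = -Real.log 4 + 2 * jsDiv pc qc ↔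
      ∀ c, 0 < pc c → 0 < qc c → P c = Q c := by
    rw [hCG, hRHS]
    constructor
    · intro h c
      have := (Finset.sum_eq_sum_iff_of_le (fun c _ => (key c).1)).1 h.symm c
        (Finset.mem_univ c)
      exact (key c).2.1 this.symm
    · intro h
      exact Finset.sum_congr rfl fun c _ => (key c).2.2 (h c)
  refine ⟨main, fun hall => ?_⟩
  rw [main]
  exact ⟨fun h c => h c (hall c).1 (hall c).2, fun h c _ _ => h c⟩
end

section
/- Let C and X be finite types, let p_c and q_c be pmfs on C with p_c = q_c, and for each c : C let P c and Q c be pmfs on X. Then C(G) ≥ − log 4, and C(G) = − log 4 if and only if P c = Q c for every c : C with p_c c > 0. In particular, when the input category distribution matches the target category distribution, the weakly supervised GAN criterion recovers the classical GAN optimum value − log 4. -/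
open Finset

private lemma xlog_ge (x y : ℝ) (hx : 0 ≤ x) (hy : 0 < y) :
    x - y ≤ x * Real.log (x / y) := by
  rcases eq_or_lt_of_le hx with h | h
  · simp [← h]; linarith
  · have h1 : Real.log (y / x) ≤ y / x - 1 := Real.log_le_sub_one_of_pos (by positivity)
    have h2 : Real.log (x / y) = -Real.log (y / x) := by
      rw [← Real.log_inv, inv_div]
    have h3 : x * (y / x) = y := by field_simp
    have h4 := mul_le_mul_of_nonneg_left h1 h.le
    rw [h2]; nlinarith

private lemma xlog_gt (x y : ℝ) (hx : 0 ≤ x) (hy : 0 < y) (hne : x ≠ y) :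
    x - y < x * Real.log (x / y) := by
  rcases eq_or_lt_of_le hx with h | h
  · simp [← h]; linarith
  · have hne1 : y / x ≠ 1 := by
      intro hh
      exact hne (by field_simp at hh; linarith)
    have h1 : Real.log (y / x) < y / x - 1 :=
      Real.log_lt_sub_one_of_pos (by positivity) hne1
    have h2 : Real.log (x / y) = -Real.log (y / x) := by
      rw [← Real.log_inv, inv_div]
    have h3 : x * (y / x) = y := by field_simp
    have h4 := mul_lt_mul_of_pos_left h1 h
    rw [h2]; nlinarith

private lemma G_key (a b : ℝ) (ha : 0 ≤ a) (hb : 0 ≤ b) :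
    0 ≤ (if 0 < a + b then a * Real.log (a / (a + b)) + b * Real.log (b / (a + b)) else 0)
        + (a + b) * Real.log 2 ∧
    ((if 0 < a + b then a * Real.log (a / (a + b)) + b * Real.log (b / (a + b)) else 0)
        + (a + b) * Real.log 2 = 0 ↔ a = b) := by
  by_cases hs : 0 < a + b
  · rw [if_pos hs]
    have hm : 0 < (a + b) / 2 := by linarith
    have key : ∀ x : ℝ, 0 ≤ x →
        x * Real.log (x / (a + b)) + x * Real.log 2 = x * Real.log (x / ((a + b) / 2)) := by
      intro x hx
      rcases eq_or_lt_of_le hx with h | h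
      · simp [← h]
      · rw [← mul_add, ← Real.log_mul (by positivity) (by norm_num)]
        congr 2
        field_simp
        try ring
    have e : a * Real.log (a / (a + b)) + b * Real.log (b / (a + b)) + (a + b) * Real.log 2
        = a * Real.log (a / ((a + b) / 2)) + b * Real.log (b / ((a + b) / 2)) := by
      rw [← key a ha, ← key b hb]; ring
    rw [e]
    have hga := xlog_ge a ((a + b) / 2) ha hm
    have hgb := xlog_ge b ((a + b) / 2) hb hm
    constructor
    · linarith
    · constructor
      · intro h0
        by_contra hne
        have hane : a ≠ (a + b) / 2 := by
          intro hh; exact hne (by linarith)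
        have := xlog_gt a ((a + b) / 2) ha hm hane
        linarith
      · intro hab
        have ha' : 0 < a := by
          rcases eq_or_lt_of_le ha with h | h
          · exfalso; rw [← h] at hab hs; rw [← hab] at hs; linarith
          · exact h
        have : (a + b) / 2 = a := by linarith
        rw [this, ← hab, div_self ha'.ne', Real.log_one]
        ring
  · have hab0 : a + b = 0 := le_antisymm (not_lt.mp hs) (by linarith)
    have ha0 : a = 0 := by linarith
    have hb0 : b = 0 := by linarith
    rw [if_neg hs]
    simp [ha0, hb0]

/-- When the input category distribution matches the target category distribution
(`p_c = q_c`), the weakly supervised GAN criterion recovers the classical GAN optimum: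
`C(G) ≥ − log 4`, with equality iff `P c = Q c` on every category of positive weight. -/
theorem CG_matched_categories
    {C X : Type*} [Fintype C] [Fintype X]
    (pc qc : C → ℝ)
    (hpc0 : ∀ c, 0 ≤ pc c) (hpc1 : ∑ c, pc c = 1)
    (hqc0 : ∀ c, 0 ≤ qc c) (hqc1 : ∑ c, qc c = 1)
    (hpq : pc = qc)
    (P Q : C → X → ℝ)
    (hP0 : ∀ c x, 0 ≤ P c x) (hP1 : ∀ c, ∑ x, P c x = 1)
    (hQ0 : ∀ c x, 0 ≤ Q c x) (hQ1 : ∀ c, ∑ x, Q c x = 1) :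
    CG pc qc P Q ≥ -Real.log 4 ∧
    (CG pc qc P Q = -Real.log 4 ↔ ∀ c, 0 < pc c → P c = Q c) := by
  subst hpq
  have ha : ∀ c x, 0 ≤ pc c * P c x := fun c x => mul_nonneg (hpc0 c) (hP0 c x)
  have hb : ∀ c x, 0 ≤ pc c * Q c x := fun c x => mul_nonneg (hpc0 c) (hQ0 c x)
  -- rewrite CG dropping the inner ifs
  have hCG : CG pc pc P Q = ∑ c, ∑ x,
      (if 0 < pc c * P c x + pc c * Q c x then
        pc c * P c x * Real.log (pc c * P c x / (pc c * P c x + pc c * Q c x)) +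
        pc c * Q c x * Real.log (pc c * Q c x / (pc c * P c x + pc c * Q c x))
      else 0) := by
    unfold CG
    refine Finset.sum_congr rfl fun c _ => Finset.sum_congr rfl fun x _ => ?_
    by_cases h : 0 < pc c * P c x + pc c * Q c x
    · rw [if_pos h, if_pos h]
      congr 1 <;> (split_ifs with h' <;> simp [h'])
    · rw [if_neg h, if_neg h]
  have hlog4 : Real.log 4 = 2 * Real.log 2 := by
    rw [show (4 : ℝ) = 2 ^ 2 by norm_num, Real.log_pow]
    push_cast; ring
  have hmass : ∑ c, ∑ x, (pc c * P c x + pc c * Q c x) = 2 := by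
    have : ∀ c, ∑ x, (pc c * P c x + pc c * Q c x) = 2 * pc c := by
      intro c
      rw [Finset.sum_add_distrib, ← Finset.mul_sum, ← Finset.mul_sum, hP1, hQ1]
      ring
    rw [Finset.sum_congr rfl fun c _ => this c, ← Finset.mul_sum, hpc1]
    norm_num
  -- key identity
  have keyid : CG pc pc P Q + Real.log 4 = ∑ c, ∑ x,
      ((if 0 < pc c * P c x + pc c * Q c x then
        pc c * P c x * Real.log (pc c * P c x / (pc c * P c x + pc c * Q c x)) +
        pc c * Q c x * Real.log (pc c * Q c x / (pc c * P c x + pc c * Q c x))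
      else 0) + (pc c * P c x + pc c * Q c x) * Real.log 2) := by
    have hfac : ∑ c, ∑ x, (pc c * P c x + pc c * Q c x) * Real.log 2
        = (∑ c, ∑ x, (pc c * P c x + pc c * Q c x)) * Real.log 2 := by
      simp [Finset.sum_mul]
    simp only [Finset.sum_add_distrib]
    rw [hfac, hmass, hCG, hlog4]
    try ring
  have hterm := fun (c : C) (x : X) => G_key (pc c * P c x) (pc c * Q c x) (ha c x) (hb c x)
  have hnn : ∀ c ∈ Finset.univ (α := C), 0 ≤ ∑ x,
      ((if 0 < pc c * P c x + pc c * Q c x then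
        pc c * P c x * Real.log (pc c * P c x / (pc c * P c x + pc c * Q c x)) +
        pc c * Q c x * Real.log (pc c * Q c x / (pc c * P c x + pc c * Q c x))
      else 0) + (pc c * P c x + pc c * Q c x) * Real.log 2) := by
    intro c _
    exact Finset.sum_nonneg fun x _ => (hterm c x).1
  have hsum_nn : 0 ≤ CG pc pc P Q + Real.log 4 := by
    rw [keyid]
    exact Finset.sum_nonneg hnn
  refine ⟨by linarith, ?_⟩
  constructor
  · intro heq
    have hzero : (∑ c, ∑ x,
        ((if 0 < pc c * P c x + pc c * Q c x then
          pc c * P c x * Real.log (pc c * P c x / (pc c * P c x + pc c * Q c x)) +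
          pc c * Q c x * Real.log (pc c * Q c x / (pc c * P c x + pc c * Q c x))
        else 0) + (pc c * P c x + pc c * Q c x) * Real.log 2)) = 0 := by
      rw [← keyid, heq]; ring
    have h1 := (Finset.sum_eq_zero_iff_of_nonneg hnn).mp hzero
    intro c hc
    funext x
    have h2 := (Finset.sum_eq_zero_iff_of_nonneg
      (fun x _ => (hterm c x).1)).mp (h1 c (Finset.mem_univ c)) x (Finset.mem_univ x)
    have h3 : pc c * P c x = pc c * Q c x := (hterm c x).2.mp h2
    exact mul_left_cancel₀ hc.ne' h3
  · intro hPQ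
    have hall : ∀ c x, pc c * P c x = pc c * Q c x := by
      intro c x
      rcases eq_or_lt_of_le (hpc0 c) with h | h
      · rw [← h]; ring
      · rw [hPQ c h]
    have : CG pc pc P Q + Real.log 4 = 0 := by
      rw [keyid]
      refine Finset.sum_eq_zero fun c _ => Finset.sum_eq_zero fun x _ => ?_
      exact (hterm c x).2.mpr (hall c x)
    linarith
end
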